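/- Let g be C¹ near 0 with g(0)=0, g'(0)=λ²>0, G its potential, and X defined by X²=2G, xX(x)>0 for x≠0. Suppose f is continuous on [0,η] and the Chouikha equation d/dx[G(x)/g(x)²]=f(G(x)) holds for |x|≤δ (x with g(x)≠0). Then for |x| small, (X(x)/g(x))' = f(X(x)²/2)·X'(x). -/

import Mathlib

open Set Filter

lemma sqrt_deriv_aux {X : ℝ → ℝ} {x d : ℝ} (hc : ContinuousAt X x) (hx : X x ≠ 0)
    (h : HasDerivAt (fun y => X y ^ 2) d x) : HasDerivAt X (d / (2 * X x)) x := by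
  have hsq : (X x) ^ 2 ≠ 0 := pow_ne_zero _ hx
  have hs : HasDerivAt (fun y => Real.sqrt (X y ^ 2)) (d / (2 * Real.sqrt (X x ^ 2))) x := by
    have h2 := (Real.hasDerivAt_sqrt hsq).comp x h
    exact h2.congr_deriv (by ring)
  rcases hx.lt_or_gt with hneg | hpos
  · have hev : ∀ᶠ y in nhds x, X y < 0 := hc.eventually_lt continuousAt_const hneg
    have heq : X =ᶠ[nhds x] fun y => -Real.sqrt (X y ^ 2) := by
      filter_upwards [hev] with y hy
      rw [Real.sqrt_sq_eq_abs, abs_of_neg hy, neg_neg]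
    have h3 := (hs.neg).congr_of_eventuallyEq heq
    refine h3.congr_deriv ?_
    rw [Real.sqrt_sq_eq_abs, abs_of_neg hneg]
    field_simp
  · have hev : ∀ᶠ y in nhds x, 0 < X y := continuousAt_const.eventually_lt hc hpos
    have heq : X =ᶠ[nhds x] fun y => Real.sqrt (X y ^ 2) := by
      filter_upwards [hev] with y hy
      rw [Real.sqrt_sq_eq_abs, abs_of_pos hy]
    have h3 := hs.congr_of_eventuallyEq heq
    refine h3.congr_deriv ?_
    rw [Real.sqrt_sq_eq_abs, abs_of_pos hpos]

theorem stmt_2 (ε lam η δ : ℝ) (hε : 0 < ε) (hlam : 0 < lam) (hη : 0 < η) (hδ : 0 < δ)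
    (g G X f : ℝ → ℝ)
    (hg : ContDiffOn ℝ 1 g (Ioo (-ε) ε))
    (hg0 : g 0 = 0) (hg'0 : deriv g 0 = lam ^ 2)
    (hG : ∀ x, G x = ∫ u in (0:ℝ)..x, g u)
    (hXcont : ∀ᶠ x in nhds (0:ℝ), ContinuousAt X x)
    (hX2 : ∀ᶠ x in nhds (0:ℝ), (X x) ^ 2 = 2 * G x)
    (hXsgn : ∀ᶠ x in nhds (0:ℝ), x ≠ 0 → 0 < x * X x)
    (hf : ContinuousOn f (Icc 0 η))
    (hChouikha : ∀ x, |x| ≤ δ → g x ≠ 0 →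
      HasDerivAt (fun y => G y / (g y) ^ 2) (f (G x)) x) :
    ∃ δ' > 0, ∀ x, |x| < δ' → x ≠ 0 →
      deriv (fun y => X y / g y) x = f ((X x) ^ 2 / 2) * deriv X x := by
  have hGd : G = fun x => ∫ u in (0:ℝ)..x, g u := funext hG
  subst hGd
  have h0mem : (0:ℝ) ∈ Ioo (-ε) ε := by constructor <;> linarith
  have hg00 : HasDerivAt g (lam ^ 2) 0 := by
    have hd : DifferentiableAt ℝ g 0 :=
      (hg.contDiffAt (isOpen_Ioo.mem_nhds h0mem)).differentiableAt one_ne_zero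
    simpa [hg'0] using hd.hasDerivAt
  -- sign of g near 0
  have hsign : ∀ᶠ x in nhds (0:ℝ), x ≠ 0 → 0 < x * g x := by
    have hlo := (hasDerivAt_iff_isLittleO.mp hg00).def
      (show (0:ℝ) < lam ^ 2 / 2 by positivity)
    filter_upwards [hlo] with x hx hx0
    simp only [hg0, sub_zero, smul_eq_mul, Real.norm_eq_abs] at hx
    have h1 : |x| * |g x - x * lam ^ 2| ≤ |x| * (lam ^ 2 / 2 * |x|) :=
      mul_le_mul_of_nonneg_left hx (abs_nonneg x)
    have h2 := neg_abs_le (x * (g x - x * lam ^ 2))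
    have h3 : 0 < x ^ 2 := by positivity
    have h4 : |x * (g x - x * lam ^ 2)| ≤ lam ^ 2 / 2 * x ^ 2 := by
      rw [abs_mul]
      calc |x| * |g x - x * lam ^ 2| ≤ |x| * (lam ^ 2 / 2 * |x|) := h1
        _ = lam ^ 2 / 2 * x ^ 2 := by rw [← sq_abs x]; ring
    have h5 : x * g x = x * (g x - x * lam ^ 2) + lam ^ 2 * x ^ 2 := by ring
    have h6 : 0 < lam ^ 2 / 2 * x ^ 2 := by positivity
    linarith
  obtain ⟨r1, hr1, hP⟩ :=
    Metric.eventually_nhds_iff.mp ((hXcont.and hX2).and (hXsgn.and hsign))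
  refine ⟨min (min r1 δ) ε, by positivity, ?_⟩
  intro x hx hx0
  have hxr : |x| < r1 := lt_of_lt_of_le hx (le_trans (min_le_left _ _) (min_le_left _ _))
  have hxδ : |x| ≤ δ := le_of_lt (lt_of_lt_of_le hx (le_trans (min_le_left _ _) (min_le_right _ _)))
  have hxε : |x| < ε := lt_of_lt_of_le hx (min_le_right _ _)
  have hxIoo : x ∈ Ioo (-ε) ε := by
    have := abs_lt.mp hxε; exact ⟨this.1, this.2⟩
  have hPx := hP (show dist x 0 < r1 by simpa [Real.dist_eq] using hxr)
  have hXc : ContinuousAt X x := hPx.1.1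
  have hX2x : X x ^ 2 = 2 * ∫ u in (0:ℝ)..x, g u := hPx.1.2
  have hXpos : 0 < x * X x := hPx.2.1 hx0
  have hgpos : 0 < x * g x := hPx.2.2 hx0
  have hXne : X x ≠ 0 := by intro h; rw [h, mul_zero] at hXpos; exact lt_irrefl 0 hXpos
  have hgne : g x ≠ 0 := by intro h; rw [h, mul_zero] at hgpos; exact lt_irrefl 0 hgpos
  -- FTC : derivative of G
  have hgint : IntervalIntegrable g MeasureTheory.volume 0 x := by
    apply ContinuousOn.intervalIntegrable
    apply hg.continuousOn.mono
    intro y hy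
    have h2 := abs_lt.mp hxε
    rw [mem_uIcc] at hy
    constructor <;> rcases hy with ⟨a, b⟩ | ⟨a, b⟩ <;> linarith
  have hmeas : StronglyMeasurableAtFilter g (nhds x) :=
    hg.continuousOn.stronglyMeasurableAtFilter isOpen_Ioo x hxIoo
  have hgcx : ContinuousAt g x := (hg.contDiffAt (isOpen_Ioo.mem_nhds hxIoo)).continuousAt
  have hGx : HasDerivAt (fun y => ∫ u in (0:ℝ)..y, g u) (g x) x :=
    intervalIntegral.integral_hasDerivAt_right hgint hmeas hgcx
  have hg'x : HasDerivAt g (deriv g x) x :=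
    ((hg.contDiffAt (isOpen_Ioo.mem_nhds hxIoo)).differentiableAt one_ne_zero).hasDerivAt
  set g' := deriv g x with hg'def
  -- derivative of X
  have hX2ev : (fun y => X y ^ 2) =ᶠ[nhds x]
      (fun y => 2 * ∫ u in (0:ℝ)..y, g u) := by
    have hOpen : IsOpen {y : ℝ | |y| < r1} := isOpen_lt continuous_abs continuous_const
    have hmem : {y : ℝ | |y| < r1} ∈ nhds x := hOpen.mem_nhds hxr
    filter_upwards [hmem] with y hy
    exact (hP (show dist y 0 < r1 by simpa [Real.dist_eq] using hy)).1.2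
  have hsqd : HasDerivAt (fun y => X y ^ 2) (2 * g x) x :=
    (hGx.const_mul 2).congr_of_eventuallyEq hX2ev
  have hXder : HasDerivAt X (g x / X x) x := by
    have := sqrt_deriv_aux hXc hXne hsqd
    convert this using 1
    rw [mul_div_mul_left _ _ (two_ne_zero)]
  -- derivative of X / g
  have hdiv : HasDerivAt (fun y => X y / g y)
      ((g x / X x * g x - X x * g') / g x ^ 2) x := hXder.div hg'x hgne
  -- Chouikha value of f
  have hCh := hChouikha x hxδ hgne
  have hdir : HasDerivAt (fun y => (∫ u in (0:ℝ)..y, g u) / g y ^ 2)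
      ((g x * g x ^ 2 - (∫ u in (0:ℝ)..x, g u) * (2 * g x ^ 1 * g')) / (g x ^ 2) ^ 2) x :=
    hGx.div (hg'x.pow 2) (pow_ne_zero 2 hgne)
  have hfval : f (∫ u in (0:ℝ)..x, g u) =
      (g x * g x ^ 2 - (∫ u in (0:ℝ)..x, g u) * (2 * g x ^ 1 * g')) / (g x ^ 2) ^ 2 :=
    hCh.unique hdir
  have hGxval : (∫ u in (0:ℝ)..x, g u) = X x ^ 2 / 2 := by linarith
  rw [hdiv.deriv, hXder.deriv, show X x ^ 2 / 2 = ∫ u in (0:ℝ)..x, g u from hGxval.symm,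
    hfval, hGxval]
  field_simp
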